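/- In the random graph-colouring model (r-regular graph on n vertices, i.i.d. colours with probabilities p_i), if one vertex K chosen uniformly at random has its colour resampled independently (new colour C' with P[C'=i]=p_i), producing new counts (M_i', N_i'), then for each colour l, E[M_l' - M_l | C(1),…,C(n)] = n⁻¹(p_l r N_l - 2 M_l) and E[N_l' - N_l | C(1),…,C(n)] = n⁻¹(n p_l - N_l). -/

import Mathlib

open MeasureTheory

open Finset

lemma stmt19_ite_and {m : Type*} [DecidableEq m] (a b l : m) :
    (if a = l ∧ b = l then (1:ℝ) else 0) = (if a = l then (1:ℝ) else 0) * (if b = l then 1 else 0) := by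
  by_cases h1 : a = l <;> by_cases h2 : b = l <;> simp [h1, h2]

lemma stmt19_sum_nbr {n : ℕ} (G : SimpleGraph (Fin n)) [DecidableRel G.Adj] {r : ℕ}
    (hreg : ∀ v, G.degree v = r) (f : Fin n → ℝ) :
    ∑ k, ∑ j' ∈ G.neighborFinset k, f j' = r * ∑ j, f j := by
  have h1 : ∀ k : Fin n, ∑ j' ∈ G.neighborFinset k, f j'
      = ∑ j' : Fin n, if G.Adj k j' then f j' else 0 := by
    intro k
    rw [SimpleGraph.neighborFinset_eq_filter, sum_filter]
  simp only [h1]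
  rw [Finset.sum_comm, Finset.mul_sum]
  refine Finset.sum_congr rfl fun j' _ => ?_
  have h2 : ∀ k, (if G.Adj k j' then f j' else 0) = (if G.Adj j' k then (1:ℝ) else 0) * f j' := by
    intro k
    by_cases h : G.Adj k j'
    · rw [if_pos h, if_pos ((G.adj_comm _ _).mp h), one_mul]
    · rw [if_neg h, if_neg (fun h' => h ((G.adj_comm _ _).mp h')), zero_mul]
  rw [Finset.sum_congr rfl fun k _ => h2 k, ← Finset.sum_mul, Finset.sum_boole]
  have h3 : (Finset.univ.filter fun k => G.Adj j' k).card = r := by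
    rw [← hreg j']
    congr 1
    rw [SimpleGraph.neighborFinset_eq_filter]
  rw [h3]

lemma stmt19_Mdiff {n m : ℕ} (G : SimpleGraph (Fin n)) [DecidableRel G.Adj] (l i : Fin m)
    (c : Fin n → Fin m) (k : Fin n) :
    (1/2 : ℝ) * (∑ j, ∑ j' ∈ G.neighborFinset j,
        if Function.update c k i j = l ∧ Function.update c k i j' = l then (1:ℝ) else 0)
      - (1/2) * (∑ j, ∑ j' ∈ G.neighborFinset j, if c j = l ∧ c j' = l then (1:ℝ) else 0)
    = ∑ j' ∈ G.neighborFinset k,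
        ((if i = l then (1:ℝ) else 0) - (if c k = l then 1 else 0)) * (if c j' = l then 1 else 0) := by
  classical
  set c' := Function.update c k i with hc'
  set F : Fin m → Fin m → ℝ := fun a b => if a = l ∧ b = l then 1 else 0 with hF
  have hF1 : ∀ a b, F a b = (if a = l then (1:ℝ) else 0) * (if b = l then 1 else 0) :=
    fun a b => stmt19_ite_and a b l
  have hFsymm : ∀ a b, F a b = F b a := by
    intro a b; rw [hF1, hF1]; ring
  set S : ℝ := ∑ j' ∈ G.neighborFinset k, (F i (c j') - F (c k) (c j')) with hS
  have hnot : k ∉ G.neighborFinset k := by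
    simp [SimpleGraph.mem_neighborFinset]
  have key : ∑ j, ∑ j' ∈ G.neighborFinset j, (F (c' j) (c' j') - F (c j) (c j')) = S + S := by
    rw [← Finset.add_sum_erase Finset.univ _ (Finset.mem_univ k)]
    congr 1
    · -- term at k
      rw [hS]
      refine Finset.sum_congr rfl fun j' hj' => ?_
      have hne : j' ≠ k := by
        intro h; subst h; exact hnot hj'
      rw [hc', Function.update_self, Function.update_of_ne hne]
    · -- sum over j ≠ k
      have h1 : ∀ j ∈ Finset.univ.erase k,
          ∑ j' ∈ G.neighborFinset j, (F (c' j) (c' j') - F (c j) (c j'))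
          = if k ∈ G.neighborFinset j then F (c j) i - F (c j) (c k) else 0 := by
        intro j hj
        have hjk : j ≠ k := Finset.ne_of_mem_erase hj
        have h2 : ∀ j' ∈ G.neighborFinset j, (F (c' j) (c' j') - F (c j) (c j'))
            = if j' = k then F (c j) i - F (c j) (c k) else 0 := by
          intro j' _
          rw [hc', Function.update_of_ne hjk]
          by_cases h : j' = k
          · subst h; rw [Function.update_self, if_pos rfl]
          · rw [Function.update_of_ne h, sub_self, if_neg h]
        rw [Finset.sum_congr rfl h2, Finset.sum_ite_eq' (G.neighborFinset j) k]
      rw [Finset.sum_congr rfl h1, Finset.sum_erase _ (by rw [if_neg hnot])]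
      have h3 : ∀ j : Fin n, (if k ∈ G.neighborFinset j then F (c j) i - F (c j) (c k) else 0)
          = if j ∈ G.neighborFinset k then F i (c j) - F (c k) (c j) else 0 := by
        intro j
        simp only [SimpleGraph.mem_neighborFinset]
        by_cases h : G.Adj j k
        · rw [if_pos h, if_pos h.symm, hFsymm (c j) i, hFsymm (c j) (c k)]
        · rw [if_neg h, if_neg (fun h' => h h'.symm)]
      rw [Finset.sum_congr rfl fun j _ => h3 j, Finset.sum_ite_mem, Finset.univ_inter]
  have hgoal : (1/2 : ℝ) * (∑ j, ∑ j' ∈ G.neighborFinset j, F (c' j) (c' j'))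
      - (1/2) * (∑ j, ∑ j' ∈ G.neighborFinset j, F (c j) (c j')) = S := by
    have := key
    rw [Finset.sum_congr rfl fun j _ => Finset.sum_sub_distrib (s := G.neighborFinset j) _ _,
      Finset.sum_sub_distrib] at this
    linarith
  calc (1/2 : ℝ) * (∑ j, ∑ j' ∈ G.neighborFinset j,
        if c' j = l ∧ c' j' = l then (1:ℝ) else 0)
      - (1/2) * (∑ j, ∑ j' ∈ G.neighborFinset j, if c j = l ∧ c j' = l then (1:ℝ) else 0)
      = S := hgoal
    _ = ∑ j' ∈ G.neighborFinset k,
        ((if i = l then (1:ℝ) else 0) - (if c k = l then 1 else 0)) * (if c j' = l then 1 else 0) := by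
      refine Finset.sum_congr rfl fun j' _ => ?_
      rw [hF1, hF1]; ring

open MeasureTheory

lemma stmt19_main {Ω : Type*} [MeasurableSpace Ω] (P : Measure Ω) [IsProbabilityMeasure P]
    {n m : ℕ}
    (C : Ω → Fin n → Fin m) (K : Ω → Fin n) (C' : Ω → Fin m)
    (hC : Measurable C) (hK : Measurable K) (hC' : Measurable C')
    (p : Fin m → ℝ) (hp : ∀ i, 0 ≤ p i)
    (hCK : ProbabilityTheory.IndepFun C K P)
    (hCKC' : ProbabilityTheory.IndepFun (fun ω => (C ω, K ω)) C' P)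
    (hKunif : ∀ k, P {ω | K ω = k} = 1 / n)
    (hC'dist : ∀ i, P {ω | C' ω = i} = ENNReal.ofReal (p i))
    (f : (Fin n → Fin m) → Fin n → Fin m → ℝ) (g : (Fin n → Fin m) → ℝ)
    (hfg : ∀ c, ∑ k, ∑ i, ((n:ℝ)⁻¹ * p i) * f c k i = g c) :
    P[fun ω => f (C ω) (K ω) (C' ω) | MeasurableSpace.comap C inferInstance]
      =ᵐ[P] fun ω => g (C ω) := by
  classical
  have hΩ : Nonempty Ω := by
    by_contra h
    rw [not_nonempty_iff] at h
    have h1 := measure_univ (μ := P)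
    rw [Set.eq_empty_of_isEmpty (Set.univ : Set Ω), measure_empty] at h1
    exact zero_ne_one h1
  haveI : Nonempty (Fin n) := ⟨K hΩ.some⟩
  haveI : Nonempty (Fin m) := ⟨C' hΩ.some⟩
  have hn : (n : ℝ) ≠ 0 := Nat.cast_ne_zero.mpr (Nat.pos_of_ne_zero (by
    rintro rfl; exact (K hΩ.some).elim0)).ne'
  set X : Ω → ((Fin n → Fin m) × Fin n × Fin m) := fun ω => (C ω, K ω, C' ω) with hX
  have hXm : Measurable X := hC.prodMk (hK.prodMk hC')
  have hInt : ∀ (φ : ((Fin n → Fin m) × Fin n × Fin m) → ℝ),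
      Integrable (fun ω => φ (X ω)) P := by
    intro φ
    refine ⟨((measurable_of_countable φ).comp hXm).aestronglyMeasurable, ?_⟩
    refine HasFiniteIntegral.of_bounded
      (C := Finset.univ.sup' Finset.univ_nonempty fun x => ‖φ x‖) ?_
    exact Filter.Eventually.of_forall fun ω =>
      Finset.le_sup' (fun x => ‖φ x‖) (Finset.mem_univ (X ω))
  have hCcomap : @Measurable Ω _ (MeasurableSpace.comap C inferInstance) _ C :=
    fun s hs => ⟨s, hs, rfl⟩
  have hgm : AEStronglyMeasurable[MeasurableSpace.comap C inferInstance]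
      (fun ω => g (C ω)) P :=
    StronglyMeasurable.aestronglyMeasurable
      (Measurable.stronglyMeasurable ((measurable_of_countable g).comp hCcomap))
  -- measure factorization
  have hsing : ∀ (c : Fin n → Fin m) (k : Fin n) (i : Fin m),
      (P (C ⁻¹' {c} ∩ ((fun ω => (K ω, C' ω)) ⁻¹' {(k, i)}))).toReal
        = (P (C ⁻¹' {c})).toReal * ((n:ℝ)⁻¹ * p i) := by
    intro c k i
    have hset : C ⁻¹' {c} ∩ ((fun ω => (K ω, C' ω)) ⁻¹' {(k, i)})
        = (fun ω => (C ω, K ω)) ⁻¹' ({c} ×ˢ {k}) ∩ C' ⁻¹' {i} := by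
      ext ω
      simp only [Set.mem_inter_iff, Set.mem_preimage, Set.mem_singleton_iff, Set.mem_prod,
        Prod.mk.injEq]
      tauto
    have h1 := hCKC'.measure_inter_preimage_eq_mul ({c} ×ˢ {k}) {i}
      ((measurableSet_singleton c).prod (measurableSet_singleton k)) (measurableSet_singleton i)
    have h2 : (fun ω => (C ω, K ω)) ⁻¹' ({c} ×ˢ {k}) = C ⁻¹' {c} ∩ K ⁻¹' {k} := by
      ext ω
      simp [Set.mem_prod]
    have h3 := hCK.measure_inter_preimage_eq_mul {c} {k}
      (measurableSet_singleton c) (measurableSet_singleton k)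
    have hKk : P (K ⁻¹' {k}) = 1 / n := hKunif k
    have hC'i : P (C' ⁻¹' {i}) = ENNReal.ofReal (p i) := hC'dist i
    rw [hset, h1, h2, h3, hKk, hC'i]
    rw [ENNReal.toReal_mul, ENNReal.toReal_mul, ENNReal.toReal_ofReal (hp i),
      ENNReal.toReal_div, ENNReal.toReal_one]
    simp only [ENNReal.toReal_natCast]
    ring
  refine (ae_eq_condExp_of_forall_setIntegral_eq hC.comap_le (hInt fun x => f x.1 x.2.1 x.2.2)
    (fun s _ _ => (hInt fun x => g x.1).integrableOn) ?_ hgm).symm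
  rintro s ⟨A, hA, rfl⟩ -
  have hmeas : ∀ c : Fin n → Fin m, MeasurableSet (C ⁻¹' {c}) :=
    fun c => hC (measurableSet_singleton c)
  set T : Finset (Fin n → Fin m) := (Set.toFinite A).toFinset with hT
  have hAeq : C ⁻¹' A = ⋃ c ∈ T, C ⁻¹' {c} := by
    ext ω
    simp only [Set.mem_preimage, Set.mem_iUnion, Set.mem_singleton_iff, hT,
      Set.Finite.mem_toFinset]
    exact ⟨fun h => ⟨C ω, h, rfl⟩, fun ⟨c, hc, hce⟩ => hce ▸ hc⟩
  have hdisj : (T : Set (Fin n → Fin m)).Pairwise (Function.onFun Disjoint fun c => C ⁻¹' {c}) :=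
    fun a _ b _ hab => Set.disjoint_left.mpr fun ω ha hb => hab (ha.symm.trans hb)
  rw [hAeq,
    integral_biUnion_finset T (fun c _ => hmeas c) hdisj (fun c _ => (hInt fun x => g x.1).integrableOn),
    integral_biUnion_finset T (fun c _ => hmeas c) hdisj
      (fun c _ => (hInt fun x => f x.1 x.2.1 x.2.2).integrableOn)]
  refine Finset.sum_congr rfl fun c _ => ?_
  have hgc : ∫ x in C ⁻¹' {c}, g (C x) ∂P = (P (C ⁻¹' {c})).toReal * g c := by
    rw [setIntegral_congr_fun (hmeas c) (g := fun _ => g c) (fun ω hω => by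
      simp only [Set.mem_preimage, Set.mem_singleton_iff] at hω
      rw [hω]), setIntegral_const, smul_eq_mul, measureReal_def]
  rw [hgc]
  -- split RHS by (K, C') values
  set Y : Ω → Fin n × Fin m := fun ω => (K ω, C' ω) with hY
  have hYmeas : ∀ y : Fin n × Fin m, MeasurableSet (C ⁻¹' {c} ∩ Y ⁻¹' {y}) :=
    fun y => (hmeas c).inter ((hK.prodMk hC') (measurableSet_singleton y))
  have hsplit : C ⁻¹' {c} = ⋃ y ∈ (Finset.univ : Finset (Fin n × Fin m)), C ⁻¹' {c} ∩ Y ⁻¹' {y} := by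
    ext ω
    simp
  have hdisj2 : ((Finset.univ : Finset (Fin n × Fin m)) : Set (Fin n × Fin m)).Pairwise
      (Function.onFun Disjoint fun y => C ⁻¹' {c} ∩ Y ⁻¹' {y}) :=
    fun a _ b _ hab => Set.disjoint_left.mpr fun ω ha hb => hab (ha.2.symm.trans hb.2)
  rw [show ∫ x in C ⁻¹' {c}, f (C x) (K x) (C' x) ∂P
      = ∑ y : Fin n × Fin m, ∫ x in C ⁻¹' {c} ∩ Y ⁻¹' {y}, f (C x) (K x) (C' x) ∂P by
    conv_lhs => rw [hsplit]
    exact integral_biUnion_finset _ (fun y _ => hYmeas y) hdisj2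
      (fun y _ => (hInt fun x => f x.1 x.2.1 x.2.2).integrableOn)]
  have hcell : ∀ y : Fin n × Fin m,
      ∫ x in C ⁻¹' {c} ∩ Y ⁻¹' {y}, f (C x) (K x) (C' x) ∂P
        = ((P (C ⁻¹' {c})).toReal * ((n:ℝ)⁻¹ * p y.2)) * f c y.1 y.2 := by
    intro y
    rw [setIntegral_congr_fun (hYmeas y) (g := fun _ => f c y.1 y.2) (fun ω hω => by
      obtain ⟨h1, h2⟩ := hω
      simp only [Set.mem_preimage, Set.mem_singleton_iff] at h1 h2
      have hk : K ω = y.1 := congrArg Prod.fst h2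
      have hi : C' ω = y.2 := congrArg Prod.snd h2
      rw [h1, hk, hi]), setIntegral_const, smul_eq_mul, measureReal_def, hsing c y.1 y.2]
  rw [Finset.sum_congr rfl fun y _ => hcell y]
  rw [← hfg c, Finset.mul_sum, Fintype.sum_prod_type]
  refine Finset.sum_congr rfl fun k _ => ?_
  rw [Finset.mul_sum]
  exact Finset.sum_congr rfl fun i _ => by ring
lemma stmt19_keyN {n m : ℕ} (p : Fin m → ℝ) (hpsum : ∑ i, p i = 1)
    (N : Fin m → (Fin n → Fin m) → ℝ)
    (hN : ∀ l c, N l c = ∑ j, if c j = l then (1:ℝ) else 0)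
    (l : Fin m) (c : Fin n → Fin m) :
    ∑ k, ∑ i, p i * (N l (Function.update c k i) - N l c) = n * p l - N l c := by
  classical
  have hdiff : ∀ (k : Fin n) (i : Fin m), N l (Function.update c k i) - N l c
      = (if i = l then (1:ℝ) else 0) - (if c k = l then 1 else 0) := by
    intro k i
    rw [hN, hN, ← Finset.sum_sub_distrib]
    rw [Finset.sum_eq_single k]
    · rw [Function.update_self]
    · intro j _ hj
      rw [Function.update_of_ne hj, sub_self]
    · intro h; exact absurd (Finset.mem_univ k) h
  have hrow : ∀ k : Fin n,
      ∑ i, p i * ((if i = l then (1:ℝ) else 0) - (if c k = l then 1 else 0))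
      = p l - (if c k = l then 1 else 0) := by
    intro k
    rw [show ∑ i, p i * ((if i = l then (1:ℝ) else 0) - (if c k = l then 1 else 0))
        = (∑ i, if i = l then p i else 0) - (∑ i, p i) * (if c k = l then 1 else 0) by
      rw [Finset.sum_mul, ← Finset.sum_sub_distrib]
      refine Finset.sum_congr rfl fun i _ => ?_
      split_ifs <;> ring]
    rw [Finset.sum_ite_eq' Finset.univ l p, if_pos (Finset.mem_univ l), hpsum, one_mul]
  calc ∑ k, ∑ i, p i * (N l (Function.update c k i) - N l c)
      = ∑ k : Fin n, (p l - (if c k = l then (1:ℝ) else 0)) := by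
        refine Finset.sum_congr rfl fun k _ => ?_
        rw [Finset.sum_congr rfl fun i (_ : i ∈ Finset.univ) => by rw [hdiff k i], hrow k]
    _ = n * p l - N l c := by
        rw [Finset.sum_sub_distrib, Finset.sum_const, Finset.card_univ, Fintype.card_fin,
          nsmul_eq_mul, hN]

lemma stmt19_keyM {n m r : ℕ} (G : SimpleGraph (Fin n)) [DecidableRel G.Adj]
    (hreg : ∀ v, G.degree v = r)
    (p : Fin m → ℝ) (hpsum : ∑ i, p i = 1)
    (N : Fin m → (Fin n → Fin m) → ℝ)
    (hN : ∀ l c, N l c = ∑ j, if c j = l then (1:ℝ) else 0)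
    (M : Fin m → (Fin n → Fin m) → ℝ)
    (hM : ∀ l c, M l c = (1/2) * ∑ j, ∑ j' ∈ G.neighborFinset j,
      if c j = l ∧ c j' = l then (1:ℝ) else 0)
    (l : Fin m) (c : Fin n → Fin m) :
    ∑ k, ∑ i, p i * (M l (Function.update c k i) - M l c)
      = p l * r * N l c - 2 * M l c := by
  classical
  have hdiff : ∀ (k : Fin n) (i : Fin m), M l (Function.update c k i) - M l c
      = ∑ j' ∈ G.neighborFinset k,
          ((if i = l then (1:ℝ) else 0) - (if c k = l then 1 else 0))
            * (if c j' = l then 1 else 0) := by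
    intro k i
    rw [hM, hM]
    exact stmt19_Mdiff G l i c k
  have hrow : ∀ k : Fin n, ∑ i, p i * (M l (Function.update c k i) - M l c)
      = ∑ j' ∈ G.neighborFinset k,
          (p l - (if c k = l then (1:ℝ) else 0)) * (if c j' = l then 1 else 0) := by
    intro k
    rw [Finset.sum_congr rfl fun i (_ : i ∈ Finset.univ) => by
      rw [hdiff k i, Finset.mul_sum]]
    rw [Finset.sum_comm]
    refine Finset.sum_congr rfl fun j' _ => ?_
    have h1 : ∑ i, p i * (((if i = l then (1:ℝ) else 0) - (if c k = l then 1 else 0))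
          * (if c j' = l then 1 else 0))
        = (∑ i, p i * ((if i = l then (1:ℝ) else 0) - (if c k = l then 1 else 0)))
            * (if c j' = l then 1 else 0) := by
      rw [Finset.sum_mul]
      exact Finset.sum_congr rfl fun i _ => by ring
    have h2 : ∑ i, p i * ((if i = l then (1:ℝ) else 0) - (if c k = l then 1 else 0))
        = p l - (if c k = l then (1:ℝ) else 0) := by
      rw [show ∑ i, p i * ((if i = l then (1:ℝ) else 0) - (if c k = l then 1 else 0))
          = (∑ i, if i = l then p i else 0) - (∑ i, p i) * (if c k = l then 1 else 0) by
        rw [Finset.sum_mul, ← Finset.sum_sub_distrib]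
        refine Finset.sum_congr rfl fun i _ => ?_
        split_ifs <;> ring]
      rw [Finset.sum_ite_eq' Finset.univ l p, if_pos (Finset.mem_univ l), hpsum, one_mul]
    rw [h1, h2]
  rw [Finset.sum_congr rfl fun k (_ : k ∈ Finset.univ) => hrow k]
  have hsplit : ∀ k : Fin n, ∑ j' ∈ G.neighborFinset k,
        (p l - (if c k = l then (1:ℝ) else 0)) * (if c j' = l then 1 else 0)
      = p l * (∑ j' ∈ G.neighborFinset k, if c j' = l then (1:ℝ) else 0)
        - ∑ j' ∈ G.neighborFinset k,
            (if c k = l then (1:ℝ) else 0) * (if c j' = l then 1 else 0) := by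
    intro k
    rw [Finset.mul_sum, ← Finset.sum_sub_distrib]
    exact Finset.sum_congr rfl fun j' _ => by ring
  rw [Finset.sum_congr rfl fun k (_ : k ∈ Finset.univ) => hsplit k, Finset.sum_sub_distrib,
    ← Finset.mul_sum, stmt19_sum_nbr G hreg, ← hN]
  have hlast : ∑ k, ∑ j' ∈ G.neighborFinset k,
        (if c k = l then (1:ℝ) else 0) * (if c j' = l then 1 else 0)
      = 2 * M l c := by
    rw [hM, Finset.sum_congr rfl fun k (_ : k ∈ Finset.univ) =>
      Finset.sum_congr rfl fun j' _ => (stmt19_ite_and (c k) (c j') l).symm]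
    ring
  rw [hlast]
  ring


theorem stmt19 {Ω : Type*} [MeasurableSpace Ω] (ℙ : Measure Ω) [IsProbabilityMeasure ℙ]
    {n m r : ℕ} (G : SimpleGraph (Fin n)) [DecidableRel G.Adj]
    (hreg : ∀ v, G.degree v = r)
    (C : Ω → Fin n → Fin m) (K : Ω → Fin n) (C' : Ω → Fin m)
    (hC : Measurable C) (hK : Measurable K) (hC' : Measurable C')
    (p : Fin m → ℝ) (hp : ∀ i, 0 < p i) (hpsum : ∑ i, p i = 1)
    (hCind : ProbabilityTheory.iIndepFun (fun j ω => C ω j) ℙ)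
    (hCdist : ∀ j i, ℙ {ω | C ω j = i} = ENNReal.ofReal (p i))
    (hCK : ProbabilityTheory.IndepFun C K ℙ)
    (hCKC' : ProbabilityTheory.IndepFun (fun ω => (C ω, K ω)) C' ℙ)
    (hKunif : ∀ k, ℙ {ω | K ω = k} = 1 / n)
    (hC'dist : ∀ i, ℙ {ω | C' ω = i} = ENNReal.ofReal (p i))
    (N : Fin m → (Fin n → Fin m) → ℝ)
    (hN : ∀ l c, N l c = ∑ j, if c j = l then (1 : ℝ) else 0)
    (M : Fin m → (Fin n → Fin m) → ℝ)
    (hM : ∀ l c, M l c = (1/2) * ∑ j, ∑ j' ∈ G.neighborFinset j,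
      if c j = l ∧ c j' = l then (1 : ℝ) else 0)
    (l : Fin m) :
    ((ℙ[fun ω => M l (Function.update (C ω) (K ω) (C' ω)) - M l (C ω) |
        MeasurableSpace.comap C inferInstance])
      =ᵐ[ℙ] fun ω => (n : ℝ)⁻¹ * (p l * r * N l (C ω) - 2 * M l (C ω))) ∧
    ((ℙ[fun ω => N l (Function.update (C ω) (K ω) (C' ω)) - N l (C ω) |
        MeasurableSpace.comap C inferInstance])
      =ᵐ[ℙ] fun ω => (n : ℝ)⁻¹ * (n * p l - N l (C ω))) := by
  constructor
  · refine stmt19_main ℙ C K C' hC hK hC' p (fun i => (hp i).le) hCK hCKC' hKunif hC'dist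
      (fun c k i => M l (Function.update c k i) - M l c)
      (fun c => (n : ℝ)⁻¹ * (p l * r * N l c - 2 * M l c)) ?_
    intro c
    show ∑ k, ∑ i, (n:ℝ)⁻¹ * p i * (M l (Function.update c k i) - M l c)
        = (n:ℝ)⁻¹ * (p l * r * N l c - 2 * M l c)
    rw [← stmt19_keyM G hreg p hpsum N hN M hM l c, Finset.mul_sum]
    refine Finset.sum_congr rfl fun k _ => ?_
    rw [Finset.mul_sum]
    exact Finset.sum_congr rfl fun i _ => by ring
  · refine stmt19_main ℙ C K C' hC hK hC' p (fun i => (hp i).le) hCK hCKC' hKunif hC'dist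
      (fun c k i => N l (Function.update c k i) - N l c)
      (fun c => (n : ℝ)⁻¹ * (n * p l - N l c)) ?_
    intro c
    show ∑ k, ∑ i, (n:ℝ)⁻¹ * p i * (N l (Function.update c k i) - N l c)
        = (n:ℝ)⁻¹ * (n * p l - N l c)
    rw [← stmt19_keyN p hpsum N hN l c, Finset.mul_sum]
    refine Finset.sum_congr rfl fun k _ => ?_
    rw [Finset.mul_sum]
    exact Finset.sum_congr rfl fun i _ => by ring
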